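/- For the complete bipartite graph K_{p,q} (p, q ≥ 1) with parts A of size p and B of size q, the resistance Laplacian R^L(K_{p,q}) has entries: diagonal entry 2(p−1)/q + (p+q−1)/p for u ∈ A and 2(q−1)/p + (p+q−1)/q for u ∈ B; off-diagonal entry −2/q for distinct u, v ∈ A; −2/p for distinct u, v ∈ B; and −(p+q−1)/(pq) when u ∈ A, v ∈ B. -/

import Mathlib

open Matrix Polynomial BigOperators

/-- `Ldag` is the Moore–Penrose inverse of `L`: `L Ldag L = L`, `Ldag L Ldag = Ldag`,
and both `L Ldag` and `Ldag L` are symmetric. -/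
def IsMoorePenroseInv {V : Type*} [Fintype V] (L Ldag : Matrix V V ℝ) : Prop :=
  L * Ldag * L = L ∧ Ldag * L * Ldag = Ldag ∧
    (L * Ldag)ᵀ = L * Ldag ∧ (Ldag * L)ᵀ = Ldag * L

/-- The resistance distance between vertices `i` and `j`, computed from the
Moore–Penrose inverse `Ldag` of the Laplacian: `r(i,j) = Ldag i i + Ldag j j - 2 Ldag i j`. -/
def resDist {V : Type*} (Ldag : Matrix V V ℝ) (i j : V) : ℝ :=
  Ldag i i + Ldag j j - 2 * Ldag i j

/-- The resistance distance matrix `R(G)`. -/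
def resMatrix {V : Type*} [DecidableEq V] (Ldag : Matrix V V ℝ) : Matrix V V ℝ :=
  Matrix.of fun i j => if i = j then 0 else resDist Ldag i j

/-- The resistance transmission `RTr(v) = ∑ u, r(u,v)` of a vertex `v`. -/
def resTrans {V : Type*} [Fintype V] (Ldag : Matrix V V ℝ) (v : V) : ℝ :=
  ∑ u, resDist Ldag u v

/-- The resistance Laplacian matrix `R^L = Diag(RTr) - R`. -/
def resLap {V : Type*} [Fintype V] [DecidableEq V] (Ldag : Matrix V V ℝ) : Matrix V V ℝ :=
  Matrix.diagonal (resTrans Ldag) - resMatrix Ldag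

/-- The resistance signless Laplacian matrix `R^Q = Diag(RTr) + R`. -/
def resSignlessLap {V : Type*} [Fintype V] [DecidableEq V] (Ldag : Matrix V V ℝ) :
    Matrix V V ℝ :=
  Matrix.diagonal (resTrans Ldag) + resMatrix Ldag

instance {V W : Type*} : DecidableRel (completeBipartiteGraph V W).Adj := fun v w => by
  simp only [completeBipartiteGraph_adj]
  infer_instance

/-- Uniqueness of the Moore–Penrose inverse. -/
lemma mp_unique {V : Type*} [Fintype V] {A B C : Matrix V V ℝ}
    (hB : IsMoorePenroseInv A B) (hC : IsMoorePenroseInv A C) : B = C := by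
  obtain ⟨b1, b2, b3, b4⟩ := hB
  obtain ⟨c1, c2, c3, c4⟩ := hC
  have hAB : A * B = A * C := by
    calc A * B = (A * B)ᵀ := b3.symm
      _ = ((A * C * A) * B)ᵀ := by rw [c1]
      _ = (A * B)ᵀ * (A * C)ᵀ := by
          simp only [transpose_mul, Matrix.mul_assoc]
      _ = (A * B) * (A * C) := by rw [b3, c3]
      _ = (A * B * A) * C := by simp only [Matrix.mul_assoc]
      _ = A * C := by rw [b1]
  have hBA : B * A = C * A := by
    calc B * A = (B * A)ᵀ := b4.symm
      _ = (B * (A * C * A))ᵀ := by rw [c1]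
      _ = (C * A)ᵀ * (B * A)ᵀ := by
          simp only [transpose_mul, Matrix.mul_assoc]
      _ = (C * A) * (B * A) := by rw [c4, b4]
      _ = C * (A * B * A) := by simp only [Matrix.mul_assoc]
      _ = C * A := by rw [b1]
  calc B = B * A * B := b2.symm
    _ = C * A * B := by rw [hBA]
    _ = C * (A * B) := by rw [Matrix.mul_assoc]
    _ = C * (A * C) := by rw [hAB]
    _ = C * A * C := by rw [Matrix.mul_assoc]
    _ = C := c2

/-- The Moore–Penrose inverse of a symmetric matrix is symmetric. -/
lemma mp_symm {V : Type*} [Fintype V] {A B : Matrix V V ℝ}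
    (hA : Aᵀ = A) (hB : IsMoorePenroseInv A B) : Bᵀ = B := by
  obtain ⟨b1, b2, b3, b4⟩ := hB
  have hBt : IsMoorePenroseInv A Bᵀ := by
    refine ⟨?_, ?_, ?_, ?_⟩
    · calc A * Bᵀ * A = (Aᵀ * (B * Aᵀ))ᵀ := by
            simp only [transpose_mul, transpose_transpose, Matrix.mul_assoc]
        _ = (A * (B * A))ᵀ := by rw [hA]
        _ = (A * B * A)ᵀ := by rw [Matrix.mul_assoc]
        _ = Aᵀ := by rw [b1]
        _ = A := hA
    · calc Bᵀ * A * Bᵀ = (B * (Aᵀ * B))ᵀ := by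
            simp only [transpose_mul, transpose_transpose, Matrix.mul_assoc]
        _ = (B * (A * B))ᵀ := by rw [hA]
        _ = (B * A * B)ᵀ := by rw [Matrix.mul_assoc]
        _ = Bᵀ := by rw [b2]
    · calc (A * Bᵀ)ᵀ = B * Aᵀ := by simp only [transpose_mul, transpose_transpose]
        _ = B * A := by rw [hA]
        _ = (B * A)ᵀ := b4.symm
        _ = Aᵀ * Bᵀ := by simp only [transpose_mul]
        _ = A * Bᵀ := by rw [hA]
    · calc (Bᵀ * A)ᵀ = Aᵀ * B := by simp only [transpose_mul, transpose_transpose]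
        _ = A * B := by rw [hA]
        _ = (A * B)ᵀ := b3.symm
        _ = Bᵀ * Aᵀ := by simp only [transpose_mul]
        _ = Bᵀ * A := by rw [hA]
  exact mp_unique hBt ⟨b1, b2, b3, b4⟩

/-- The resistance distance can be computed from any explicit solution of
`L x = e_i - e_j`. -/
lemma resDist_eq {V : Type*} [Fintype V] [DecidableEq V] {L Ldag : Matrix V V ℝ}
    (hL : Lᵀ = L) (hpen : IsMoorePenroseInv L Ldag) (i j : V) (x : V → ℝ)
    (hx : L *ᵥ x = fun v => (if v = i then (1 : ℝ) else 0) - (if v = j then 1 else 0)) :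
    resDist Ldag i j = x i - x j := by
  have hsym : Ldagᵀ = Ldag := mp_symm hL hpen
  obtain ⟨h1, h2, h3, h4⟩ := hpen
  set d : V → ℝ := fun v => (if v = i then (1 : ℝ) else 0) - (if v = j then 1 else 0) with hd
  have key : d ⬝ᵥ (Ldag *ᵥ d) = x ⬝ᵥ d := by
    conv_lhs => rw [← hx]
    calc (L *ᵥ x) ⬝ᵥ (Ldag *ᵥ (L *ᵥ x))
        = (x ᵥ* Lᵀ) ⬝ᵥ (Ldag *ᵥ (L *ᵥ x)) := by rw [Matrix.vecMul_transpose]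
      _ = x ⬝ᵥ (Lᵀ *ᵥ (Ldag *ᵥ (L *ᵥ x))) := (Matrix.dotProduct_mulVec x Lᵀ _).symm
      _ = x ⬝ᵥ ((Lᵀ * Ldag * L) *ᵥ x) := by
          rw [Matrix.mulVec_mulVec, Matrix.mulVec_mulVec]
      _ = x ⬝ᵥ (L *ᵥ x) := by rw [hL, h1]
      _ = x ⬝ᵥ d := by rw [hx]
  have lhs : d ⬝ᵥ (Ldag *ᵥ d) = Ldag i i + Ldag j j - Ldag i j - Ldag j i := by
    simp only [hd, dotProduct, mulVec, sub_mul, mul_sub, ite_mul, one_mul, zero_mul,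
      mul_ite, mul_one, mul_zero, Finset.sum_sub_distrib, Finset.sum_ite_eq,
      Finset.sum_ite_eq', Finset.mem_univ, if_true]
    ring
  have rhs : x ⬝ᵥ d = x i - x j := by
    simp only [hd, dotProduct, mul_sub, mul_ite, mul_one, mul_zero,
      Finset.sum_sub_distrib, Finset.sum_ite_eq', Finset.mem_univ, if_true]
  have hji : Ldag i j = Ldag j i := congrFun (congrFun hsym j) i
  unfold resDist
  rw [lhs, rhs] at key
  linarith [key, hji]

section Bipartite

variable (p q : ℕ)

private lemma nbhdL (u : Fin p) :
    (completeBipartiteGraph (Fin p) (Fin q)).neighborFinset (Sum.inl u) =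
      Finset.univ.map ⟨Sum.inr, Sum.inr_injective⟩ := by
  ext w
  cases w <;> simp [SimpleGraph.mem_neighborFinset]

private lemma nbhdR (u : Fin q) :
    (completeBipartiteGraph (Fin p) (Fin q)).neighborFinset (Sum.inr u) =
      Finset.univ.map ⟨Sum.inl, Sum.inl_injective⟩ := by
  ext w
  cases w <;> simp [SimpleGraph.mem_neighborFinset]

private lemma degL (u : Fin p) :
    (completeBipartiteGraph (Fin p) (Fin q)).degree (Sum.inl u) = q := by
  rw [SimpleGraph.degree, nbhdL, Finset.card_map, Finset.card_univ, Fintype.card_fin]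

private lemma degR (u : Fin q) :
    (completeBipartiteGraph (Fin p) (Fin q)).degree (Sum.inr u) = p := by
  rw [SimpleGraph.degree, nbhdR, Finset.card_map, Finset.card_univ, Fintype.card_fin]

end Bipartite

theorem resLap_completeBipartite (p q : ℕ) (hp : 1 ≤ p) (hq : 1 ≤ q)
    (Ldag : Matrix (Fin p ⊕ Fin q) (Fin p ⊕ Fin q) ℝ)
    (hpen : IsMoorePenroseInv ((completeBipartiteGraph (Fin p) (Fin q)).lapMatrix ℝ) Ldag) :
    (∀ u : Fin p, resLap Ldag (Sum.inl u) (Sum.inl u) =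
      2 * ((p : ℝ) - 1) / q + ((p : ℝ) + q - 1) / p) ∧
    (∀ u : Fin q, resLap Ldag (Sum.inr u) (Sum.inr u) =
      2 * ((q : ℝ) - 1) / p + ((p : ℝ) + q - 1) / q) ∧
    (∀ u v : Fin p, u ≠ v → resLap Ldag (Sum.inl u) (Sum.inl v) = -(2 / q)) ∧
    (∀ u v : Fin q, u ≠ v → resLap Ldag (Sum.inr u) (Sum.inr v) = -(2 / p)) ∧
    (∀ (u : Fin p) (v : Fin q),
      resLap Ldag (Sum.inl u) (Sum.inr v) = -(((p : ℝ) + q - 1) / (p * q))) := by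
  set G := completeBipartiteGraph (Fin p) (Fin q) with hG
  set L := G.lapMatrix ℝ with hLdef
  have hL : Lᵀ = L := (SimpleGraph.isSymm_lapMatrix ℝ G)
  have hP0 : (0 : ℝ) < p := by exact_mod_cast hp
  have hQ0 : (0 : ℝ) < q := by exact_mod_cast hq
  have hP : (p : ℝ) ≠ 0 := ne_of_gt hP0
  have hQ : (q : ℝ) ≠ 0 := ne_of_gt hQ0
  have hN : (p : ℝ) + q ≠ 0 := by positivity
  -- resistance within the left part
  have rAA : ∀ a b : Fin p, a ≠ b →
      resDist Ldag (Sum.inl a) (Sum.inl b) = 2 / q := by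
    intro a b hab
    have h := resDist_eq hL hpen (Sum.inl a) (Sum.inl b)
      (Sum.elim (fun u => ((if u = a then (1:ℝ) else 0) - (if u = b then 1 else 0)) / q)
        (fun _ => 0)) ?_
    · rw [h]; simp [hab, Ne.symm hab]; ring
    · funext v
      rw [SimpleGraph.lapMatrix_mulVec_apply]
      cases v with
      | inl u =>
        rw [degL, nbhdL]
        simp only [Finset.sum_map, Function.Embedding.coeFn_mk, Sum.elim_inr, Sum.elim_inl,
          Finset.sum_const, smul_zero, Sum.inl.injEq]
        field_simp
        ring
      | inr w =>
        rw [degR, nbhdR]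
        simp only [Finset.sum_map, Function.Embedding.coeFn_mk, Sum.elim_inl, Sum.elim_inr,
          mul_zero, sub_div, Finset.sum_sub_distrib, Finset.sum_div, Finset.sum_ite_eq',
          Finset.mem_univ, if_true, reduceCtorEq]
        simp [ite_div]
  -- resistance within the right part
  have rBB : ∀ a b : Fin q, a ≠ b →
      resDist Ldag (Sum.inr a) (Sum.inr b) = 2 / p := by
    intro a b hab
    have h := resDist_eq hL hpen (Sum.inr a) (Sum.inr b)
      (Sum.elim (fun _ => (0:ℝ))
        (fun u => ((if u = a then (1:ℝ) else 0) - (if u = b then 1 else 0)) / p)) ?_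
    · rw [h]; simp [hab, Ne.symm hab]; ring
    · funext v
      rw [SimpleGraph.lapMatrix_mulVec_apply]
      cases v with
      | inl u =>
        rw [degL, nbhdL]
        simp only [Finset.sum_map, Function.Embedding.coeFn_mk, Sum.elim_inl, Sum.elim_inr,
          mul_zero, sub_div, Finset.sum_sub_distrib, Finset.sum_div, Finset.sum_ite_eq',
          Finset.mem_univ, if_true, reduceCtorEq]
        simp [ite_div]
      | inr w =>
        rw [degR, nbhdR]
        simp only [Finset.sum_map, Function.Embedding.coeFn_mk, Sum.elim_inl, Sum.elim_inr,
          Finset.sum_const, smul_zero, Sum.inr.injEq]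
        field_simp
        ring
  -- resistance between the parts
  have rABfun : ∀ (a : Fin p) (b : Fin q), ∃ x : (Fin p ⊕ Fin q) → ℝ,
      (L *ᵥ x = fun v => (if v = Sum.inl a then (1 : ℝ) else 0) -
        (if v = Sum.inr b then 1 else 0)) ∧
      x (Sum.inl a) - x (Sum.inr b) = ((p : ℝ) + q - 1) / (p * q) := by
    intro a b
    refine ⟨Sum.elim
      (fun u => ((if u = a then (1:ℝ) else 0) - 1 / p) / q + 1 / (p * (p + q)))
      (fun w => (1 / q - (if w = b then (1:ℝ) else 0)) / p - 1 / (q * (p + q))), ?_, ?_⟩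
    · funext v
      rw [SimpleGraph.lapMatrix_mulVec_apply]
      cases v with
      | inl u =>
        rw [degL, nbhdL]
        simp only [Finset.sum_map, Function.Embedding.coeFn_mk, Sum.elim_inl, Sum.elim_inr,
          Finset.sum_sub_distrib, Finset.sum_div, Finset.sum_const, Finset.card_univ,
          Fintype.card_fin, nsmul_eq_mul, Finset.sum_ite_eq', Finset.mem_univ, if_true,
          Sum.inl.injEq, reduceCtorEq, if_false, sub_div, ite_div, zero_div]
        by_cases h : u = a <;> simp only [h, if_true, if_false] <;> field_simp <;> ring
      | inr w =>
        rw [degR, nbhdR]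
        simp only [Finset.sum_map, Function.Embedding.coeFn_mk, Sum.elim_inl, Sum.elim_inr,
          Finset.sum_sub_distrib, Finset.sum_div, Finset.sum_const, Finset.card_univ,
          Fintype.card_fin, nsmul_eq_mul, Finset.sum_ite_eq', Finset.mem_univ, if_true,
          Sum.inr.injEq, reduceCtorEq, if_false, sub_div, ite_div, zero_div,
          Finset.sum_add_distrib]
        by_cases h : w = b <;> simp only [h, if_true, if_false] <;> field_simp <;> ring
    · simp only [Sum.elim_inl, Sum.elim_inr, if_true]
      field_simp
      ring
  have rAB : ∀ (a : Fin p) (b : Fin q),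
      resDist Ldag (Sum.inl a) (Sum.inr b) = ((p : ℝ) + q - 1) / (p * q) := by
    intro a b
    obtain ⟨x, hx, hval⟩ := rABfun a b
    rw [resDist_eq hL hpen _ _ x hx, hval]
  have rBA : ∀ (a : Fin p) (b : Fin q),
      resDist Ldag (Sum.inr b) (Sum.inl a) = ((p : ℝ) + q - 1) / (p * q) := by
    intro a b
    obtain ⟨x, hx, hval⟩ := rABfun a b
    have hx' : L *ᵥ (-x) = fun v => (if v = Sum.inr b then (1 : ℝ) else 0) -
        (if v = Sum.inl a then 1 else 0) := by
      rw [Matrix.mulVec_neg, hx]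
      funext v
      simp only [Pi.neg_apply, sub_eq_iff_eq_add]
      ring
    rw [resDist_eq hL hpen _ _ (-x) hx']
    simp only [Pi.neg_apply]
    linarith [hval]
  have rdiag : ∀ v, resDist Ldag v v = 0 := by
    intro v; unfold resDist; ring
  -- resistance transmissions
  have transL : ∀ v : Fin p, resTrans Ldag (Sum.inl v) =
      2 * ((p : ℝ) - 1) / q + ((p : ℝ) + q - 1) / p := by
    intro v
    unfold resTrans
    rw [Fintype.sum_sum_type]
    have h1 : ∑ u : Fin p, resDist Ldag (Sum.inl u) (Sum.inl v)
        = ∑ u : Fin p, ((2 : ℝ) / q - if u = v then (2:ℝ) / q else 0) := by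
      refine Finset.sum_congr rfl fun u _ => ?_
      by_cases h : u = v
      · subst h; simp [rdiag]
      · simp [h, rAA u v h]
    have h2 : ∑ u : Fin q, resDist Ldag (Sum.inr u) (Sum.inl v)
        = ∑ _u : Fin q, ((p : ℝ) + q - 1) / (p * q) := by
      refine Finset.sum_congr rfl fun u _ => rBA v u
    rw [h1, h2]
    simp only [Finset.sum_sub_distrib, Finset.sum_const, Finset.card_univ, Fintype.card_fin,
      nsmul_eq_mul, Finset.sum_ite_eq', Finset.mem_univ, if_true]
    field_simp
  have transR : ∀ v : Fin q, resTrans Ldag (Sum.inr v) =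
      2 * ((q : ℝ) - 1) / p + ((p : ℝ) + q - 1) / q := by
    intro v
    unfold resTrans
    rw [Fintype.sum_sum_type]
    have h1 : ∑ u : Fin q, resDist Ldag (Sum.inr u) (Sum.inr v)
        = ∑ u : Fin q, ((2 : ℝ) / p - if u = v then (2:ℝ) / p else 0) := by
      refine Finset.sum_congr rfl fun u _ => ?_
      by_cases h : u = v
      · subst h; simp [rdiag]
      · simp [h, rBB u v h]
    have h2 : ∑ u : Fin p, resDist Ldag (Sum.inl u) (Sum.inr v)
        = ∑ _u : Fin p, ((p : ℝ) + q - 1) / (p * q) := by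
      refine Finset.sum_congr rfl fun u _ => rAB u v
    rw [h1, h2]
    simp only [Finset.sum_sub_distrib, Finset.sum_const, Finset.card_univ, Fintype.card_fin,
      nsmul_eq_mul, Finset.sum_ite_eq', Finset.mem_univ, if_true]
    field_simp
    ring
  refine ⟨?_, ?_, ?_, ?_, ?_⟩
  · intro u
    have h := transL u
    simp only [resLap, Matrix.sub_apply, Matrix.diagonal_apply_eq, resMatrix, Matrix.of_apply,
      if_true, eq_self_iff_true, sub_zero]
    exact h
  · intro u
    have h := transR u
    simp only [resLap, Matrix.sub_apply, Matrix.diagonal_apply_eq, resMatrix, Matrix.of_apply,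
      if_true, eq_self_iff_true, sub_zero]
    exact h
  · intro u v huv
    have hne : (Sum.inl u : Fin p ⊕ Fin q) ≠ Sum.inl v := by simp [huv]
    simp only [resLap, Matrix.sub_apply, Matrix.diagonal_apply_ne _ hne, resMatrix,
      Matrix.of_apply, if_neg hne, zero_sub]
    rw [rAA u v huv]
  · intro u v huv
    have hne : (Sum.inr u : Fin p ⊕ Fin q) ≠ Sum.inr v := by simp [huv]
    simp only [resLap, Matrix.sub_apply, Matrix.diagonal_apply_ne _ hne, resMatrix,
      Matrix.of_apply, if_neg hne, zero_sub]
    rw [rBB u v huv]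
  · intro u v
    have hne : (Sum.inl u : Fin p ⊕ Fin q) ≠ Sum.inr v := by simp
    simp only [resLap, Matrix.sub_apply, Matrix.diagonal_apply_ne _ hne, resMatrix,
      Matrix.of_apply, if_neg hne, zero_sub]
    rw [rAB u v]
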